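/- Let (T, V) be a rooted tree-decomposition of a graph G, t a node of T, P a t-admissible path, and define W_u := V_u ∪ (V(P) ∩ V_{T_u}) for u a descendant of t and W_u := V_u otherwise. Then for every node u of T, every connected component of the induced subgraph G[W_u] contains a vertex of V_u. -/

import Mathlib

open SimpleGraph

universe u

/-- `x` and `y` are joined by a walk in `G` all of whose vertices lie in `S`. -/
def ConnIn {V : Type u} (G : SimpleGraph V) (S : Set V) (x y : V) : Prop :=
  ∃ p : G.Walk x y, ∀ v ∈ p.support, v ∈ S

/-- `S` is a (nonempty) connected vertex set of `G`, i.e. `G[S]` is connected. -/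
def IsConnSet {V : Type u} (G : SimpleGraph V) (S : Set V) : Prop :=
  S.Nonempty ∧ ∀ x ∈ S, ∀ y ∈ S, ConnIn G S x y

/-- A tree-decomposition of `G` over the tree `T`. -/
structure TreeDecomp {V ι : Type u} (G : SimpleGraph V) (T : SimpleGraph ι) where
  isTree : T.IsTree
  bag : ι → Set V
  exists_bag : ∀ v : V, ∃ t, v ∈ bag t
  exists_bag_adj : ∀ ⦃u v : V⦄, G.Adj u v → ∃ t, u ∈ bag t ∧ v ∈ bag t
  bag_sep : ∀ ⦃t₁ t₃ : ι⦄ (p : T.Walk t₁ t₃), p.IsPath → ∀ t₂ ∈ p.support,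
      bag t₁ ∩ bag t₃ ⊆ bag t₂

/-- The union of the bags `B u` over `u ∈ A`. -/
def unionBags {V ι : Type u} (B : ι → Set V) (A : Set ι) : Set V := ⋃ u ∈ A, B u

/-- `s` is a descendant of `t` in the tree `T` rooted at `r`:
`t` lies on the (unique) `r`–`s` path. -/
def Desc {ι : Type u} (T : SimpleGraph ι) (r t s : ι) : Prop :=
  ∃ p : T.Walk r s, p.IsPath ∧ t ∈ p.support

/-- The set of descendants of `t` (the subtree `T_t`). -/
def descSet {ι : Type u} (T : SimpleGraph ι) (r t : ι) : Set ι := {s | Desc T r t s}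

/-- `s` is a child of `t` in the tree `T` rooted at `r`. -/
def IsChild {ι : Type u} (T : SimpleGraph ι) (r t s : ι) : Prop :=
  T.Adj t s ∧ Desc T r t s

/-- The vertex set of the component of `t₁` in `T` minus the edge `t₁t₂`. -/
def Side {ι : Type u} (T : SimpleGraph ι) (t₁ t₂ : ι) : Set ι :=
  {u | ∃ p : T.Walk u t₁, p.IsPath ∧ t₂ ∉ p.support}

/-- The family of bags `B` is stable: for every tree edge `t₁t₂`, both sides
induce connected subgraphs of `G`. -/
def StableBags {V ι : Type u} (G : SimpleGraph V) (T : SimpleGraph ι) (B : ι → Set V) : Prop :=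
  ∀ ⦃t₁ t₂ : ι⦄, T.Adj t₁ t₂ → IsConnSet G (unionBags B (Side T t₁ t₂))

def TreeDecomp.Stable {V ι : Type u} {G : SimpleGraph V} {T : SimpleGraph ι}
    (td : TreeDecomp G T) : Prop :=
  StableBags G T td.bag

/-- `P` is a `t`-admissible path (w.r.t. the root `r` and bags `B`): a shortest
path lying in `V_{T_t}` joining two distinct components of `G[B t]`. -/
structure IsAdmissible {V ι : Type u} (G : SimpleGraph V) (T : SimpleGraph ι)
    (B : ι → Set V) (r t : ι) {x y : V} (P : G.Walk x y) : Prop where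
  isPath : P.IsPath
  support_sub : ∀ v ∈ P.support, v ∈ unionBags B (descSet T r t)
  fst_mem : x ∈ B t
  snd_mem : y ∈ B t
  not_conn : ¬ ConnIn G (B t) x y
  minimal : ∀ ⦃x' y' : V⦄ (Q : G.Walk x' y'), Q.IsPath →
      (∀ v ∈ Q.support, v ∈ unionBags B (descSet T r t)) →
      x' ∈ B t → y' ∈ B t → ¬ ConnIn G (B t) x' y' → P.length ≤ Q.length

/-- The updated bags obtained by adding the path `P` as in `(*)`:
`W_u = V_u ∪ (V(P) ∩ V_{T_u})` for descendants `u` of `t`, and `W_u = V_u` otherwise. -/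
def updatedBag {V ι : Type u} (T : SimpleGraph ι) (B : ι → Set V) (r t : ι)
    {G : SimpleGraph V} {x y : V} (P : G.Walk x y) (u : ι) : Set V :=
  B u ∪ {v | Desc T r t u ∧ v ∈ P.support ∧ v ∈ unionBags B (descSet T r u)}

/-- The tree-width of `G`: the least `k` such that `G` has a tree-decomposition
all of whose bags have at most `k + 1` vertices. -/
noncomputable def treewidth {V : Type u} (G : SimpleGraph V) : ℕ :=
  sInf {k | ∃ (ι : Type u) (T : SimpleGraph ι) (td : TreeDecomp G T),
    ∀ t, (td.bag t).ncard ≤ k + 1}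

/-- A tree-decomposition is connected if every bag is a connected vertex set. -/
def TreeDecomp.IsConn {V ι : Type u} {G : SimpleGraph V} {T : SimpleGraph ι}
    (td : TreeDecomp G T) : Prop :=
  ∀ t, IsConnSet G (td.bag t)

/-- The connected tree-width of `G`. -/
noncomputable def ctw {V : Type u} (G : SimpleGraph V) : ℕ :=
  sInf {k | ∃ (ι : Type u) (T : SimpleGraph ι) (td : TreeDecomp G T),
    td.IsConn ∧ ∀ t, (td.bag t).ncard ≤ k + 1}

/-- The weak connected tree-width of `G`: the least `k` such that `G` has a
tree-decomposition each of whose bags is contained in a connected set of at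
most `k + 1` vertices. -/
noncomputable def wctw {V : Type u} (G : SimpleGraph V) : ℕ :=
  sInf {k | ∃ (ι : Type u) (T : SimpleGraph ι) (td : TreeDecomp G T),
    ∀ t, ∃ X, td.bag t ⊆ X ∧ IsConnSet G X ∧ X.ncard ≤ k + 1}

/-- The characteristic vector over GF(2) of the edge set of a walk. -/
noncomputable def walkChar {V : Type u} {G : SimpleGraph V} {x y : V}
    (p : G.Walk x y) : Sym2 V → ZMod 2 :=
  fun e => by classical exact if e ∈ p.edges then 1 else 0

/-- The characteristic vectors of the cycles of `G` of length at most `ℓ`. -/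
def cycleChars {V : Type u} (G : SimpleGraph V) (ℓ : ℕ) : Set (Sym2 V → ZMod 2) :=
  {f | ∃ (v : V) (p : G.Walk v v), p.IsCycle ∧ p.length ≤ ℓ ∧ f = walkChar p}

/-- The cycles of length at most `ℓ` generate the cycle space of `G` over GF(2). -/
def GeneratesLE {V : Type u} (G : SimpleGraph V) (ℓ : ℕ) : Prop :=
  ∀ ⦃v : V⦄ (p : G.Walk v v), p.IsCycle →
    walkChar p ∈ Submodule.span (ZMod 2) (cycleChars G ℓ)

/-- `ℓ(G)`: the least `ℓ` such that the cycles of length at most `ℓ`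
generate the cycle space of `G`. -/
noncomputable def ellGraph {V : Type u} (G : SimpleGraph V) : ℕ :=
  sInf {ℓ | GeneratesLE G ℓ}

/-- `Γ` is a set of cycles of `G` generating its cycle space over GF(2). -/
def GeneratesSet {V : Type u} (G : SimpleGraph V) (Γ : Set (Σ v : V, G.Walk v v)) : Prop :=
  (∀ c ∈ Γ, c.2.IsCycle) ∧
  ∀ ⦃v : V⦄ (p : G.Walk v v), p.IsCycle →
    walkChar p ∈ Submodule.span (ZMod 2) {f | ∃ c ∈ Γ, f = walkChar c.2}

/-- A bramble: a collection of connected vertex sets, any two of which have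
connected union. -/
def IsBramble {V : Type u} (G : SimpleGraph V) (B : Set (Set V)) : Prop :=
  (∀ S ∈ B, IsConnSet G S) ∧ ∀ S ∈ B, ∀ S' ∈ B, IsConnSet G (S ∪ S')

/-- `X` is a connected cover of the bramble `B`. -/
def IsConnCover {V : Type u} (G : SimpleGraph V) (B : Set (Set V)) (X : Set V) : Prop :=
  IsConnSet G X ∧ ∀ S ∈ B, (X ∩ S).Nonempty

/-- The connected order of a bramble: the least size of a connected cover. -/
noncomputable def connOrder {V : Type u} (G : SimpleGraph V) (B : Set (Set V)) : ℕ :=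
  sInf {n | ∃ X, IsConnCover G B X ∧ X.ncard = n}

/-- The maximum connected order of a bramble of `G`. -/
noncomputable def cbn {V : Type u} (G : SimpleGraph V) : ℕ :=
  sSup {n | ∃ B, IsBramble G B ∧ connOrder G B = n}

/-- A geodesic cycle: a cycle containing a shortest `G`-path between any two
of its vertices. -/
def IsGeodesicCycle {V : Type u} (G : SimpleGraph V) {v : V} (p : G.Walk v v) : Prop :=
  p.IsCycle ∧ ∀ x ∈ p.support, ∀ y ∈ p.support,
    ∃ q : G.Walk x y, q.length = G.dist x y ∧ ∀ e ∈ q.edges, e ∈ p.edges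

/-- The graph obtained from `K_n` by subdividing every edge exactly `k` times:
the edge between `i < j` is replaced by the path
`i, ((i,j),0), ((i,j),1), …, ((i,j),k-1), j`. -/
def subK (n k : ℕ) : SimpleGraph (Fin n ⊕ ({p : Fin n × Fin n // p.1 < p.2} × Fin k)) :=
  SimpleGraph.fromRel fun u v =>
    match u, v with
    | Sum.inl i, Sum.inl j => i < j ∧ k = 0
    | Sum.inl i, Sum.inr (e, c) =>
        (e.val.1 = i ∧ (c : ℕ) = 0) ∨ (e.val.2 = i ∧ (c : ℕ) = k - 1)
    | Sum.inr (e, c), Sum.inr (e', c') => e = e' ∧ (c' : ℕ) = (c : ℕ) + 1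
    | _, _ => False

section AuxLemmas

variable {V ι : Type u} {G : SimpleGraph V} {T : SimpleGraph ι}

/-- If the end vertex of a path lies on the part taken until `c`, then `c` is the end. -/
lemma endpoint_takeUntil_aux [DecidableEq ι] {a b c : ι} {p : T.Walk a b} (hp : p.IsPath)
    (hc : c ∈ p.support) (hb : b ∈ (p.takeUntil c hc).support) : c = b := by
  have hsup : p.support = (p.takeUntil c hc).support ++ (p.dropUntil c hc).support.tail := by
    conv_lhs => rw [← p.take_spec hc]
    rw [SimpleGraph.Walk.support_append]
  have hnd := hp.support_nodup
  rw [hsup] at hnd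
  have hdisj := (List.nodup_append'.mp hnd).2.2
  have hbd : b ∈ (p.dropUntil c hc).support := SimpleGraph.Walk.end_mem_support _
  rw [SimpleGraph.Walk.support_eq_cons] at hbd
  rcases List.mem_cons.mp hbd with h | h
  · exact h.symm
  · exact absurd h (hdisj hb)

/-- If `s` is a descendant of `u` and `s'` is not, every path from `s'` to `s`
passes through `u`. -/
lemma mem_path_of_not_desc (hT : T.IsTree) {r u s s' : ι} (hs : Desc T r u s)
    (hs' : ¬ Desc T r u s') {q : T.Walk s' s} (hq : q.IsPath) : u ∈ q.support := by
  classical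
  obtain ⟨p, hp, hup⟩ := hs
  obtain ⟨p'⟩ := hT.isConnected.preconnected r s'
  by_contra hu
  have hbyp : (p'.bypass.append q).bypass = p :=
    (hT.existsUnique_path r s).unique ((p'.bypass.append q).bypass_isPath) hp
  have : u ∈ (p'.bypass.append q).support := by
    rw [← hbyp] at hup
    exact (p'.bypass.append q).support_bypass_subset hup
  rw [SimpleGraph.Walk.mem_support_append_iff] at this
  rcases this with h | h
  · exact hs' ⟨p'.bypass, p'.bypass_isPath, h⟩
  · exact hu h

/-- If `u` is a descendant of `t` and `s` is a descendant of `u`, every path from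
`t` to `s` passes through `u`. -/
lemma mem_path_of_desc_desc (hT : T.IsTree) {r t u s : ι} (htu : Desc T r t u)
    (hus : Desc T r u s) {q : T.Walk t s} (hq : q.IsPath) : u ∈ q.support := by
  classical
  obtain ⟨pu, hpu, htpu⟩ := htu
  obtain ⟨ps, hps, hups⟩ := hus
  by_contra hu
  set pt := pu.takeUntil t htpu with hpt_def
  have hpt : pt.IsPath := hpu.takeUntil htpu
  have hbyp : (pt.append q).bypass = ps :=
    (hT.existsUnique_path r s).unique ((pt.append q).bypass_isPath) hps
  have hmem : u ∈ (pt.append q).support := by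
    rw [← hbyp] at hups
    exact (pt.append q).support_bypass_subset hups
  rw [SimpleGraph.Walk.mem_support_append_iff] at hmem
  rcases hmem with h | h
  · -- `u` lies on the path from `r` to `t`; then `pt.takeUntil u` is a path from
    -- `r` to `u`, hence equals `pu`, which contains `t`; so `u = t`.
    have hq' : (pt.takeUntil u h).IsPath := hpt.takeUntil h
    have heq : pt.takeUntil u h = pu :=
      (hT.existsUnique_path r u).unique hq' hpu
    have ht' : t ∈ (pt.takeUntil u h).support := by rw [heq]; exact htpu
    have : u = t := endpoint_takeUntil_aux hpt h ht'
    subst this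
    exact hu q.start_mem_support
  · exact hu h

/-- Key step: from any vertex `w` of `P` lying in `V_{T_u}`, walking along `P`
towards `x` we reach a vertex of `B u` while staying in `W_u`. -/
lemma key_reach {V ι : Type u} {G : SimpleGraph V} {T : SimpleGraph ι}
    (td : TreeDecomp G T) {r t u : ι} {x y : V} {P : G.Walk x y}
    (hP : IsAdmissible G T td.bag r t P) (hdu : Desc T r t u) :
    ∀ {w z : V} (q : G.Walk w z), z ∈ td.bag t → (∀ v ∈ q.support, v ∈ P.support) →
      w ∈ unionBags td.bag (descSet T r u) →
      ∃ v ∈ td.bag u, ConnIn G (updatedBag T td.bag r t P u) w v := by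
  classical
  intro w z q
  induction q with
  | nil =>
    rename_i a
    intro hz _ hw
    obtain ⟨s, hsdesc, hws⟩ : ∃ s ∈ descSet T r u, a ∈ td.bag s := by
      simpa [unionBags, Set.mem_iUnion] using hw
    -- get a path from `t` to `s` in `T`
    obtain ⟨q0⟩ := td.isTree.isConnected.preconnected t s
    have hq0 : q0.bypass.IsPath := q0.bypass_isPath
    have hu : u ∈ q0.bypass.support := mem_path_of_desc_desc td.isTree hdu hsdesc hq0
    have hxu : a ∈ td.bag u :=
      td.bag_sep q0.bypass hq0 u hu ⟨hz, hws⟩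
    refine ⟨a, hxu, SimpleGraph.Walk.nil, ?_⟩
    intro v hv
    simp only [SimpleGraph.Walk.support_nil, List.mem_singleton] at hv
    subst hv
    exact Or.inl hxu
  | @cons w w' _ h q ih =>
    intro hz hsub hw
    have hwP : w ∈ P.support := hsub w (SimpleGraph.Walk.start_mem_support _)
    have hwW : w ∈ updatedBag T td.bag r t P u := by
      right
      refine ⟨hdu, hwP, hw⟩
    by_cases hw' : w' ∈ unionBags td.bag (descSet T r u)
    · obtain ⟨v, hv, wk, hwk⟩ := ih hz
        (fun v hv => hsub v (by rw [SimpleGraph.Walk.support_cons]; exact List.mem_cons_of_mem _ hv))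
        hw'
      refine ⟨v, hv, SimpleGraph.Walk.cons h wk, ?_⟩
      intro z hz
      rw [SimpleGraph.Walk.support_cons] at hz
      rcases List.mem_cons.mp hz with hz | hz
      · subst hz; exact hwW
      · exact hwk z hz
    · obtain ⟨s', hws', hw's'⟩ := td.exists_bag_adj h
      obtain ⟨s, hsdesc, hws⟩ : ∃ s ∈ descSet T r u, w ∈ td.bag s := by
        simpa [unionBags, Set.mem_iUnion] using hw
      have hs' : ¬ Desc T r u s' := by
        intro hdesc
        exact hw' (by simp only [unionBags, Set.mem_iUnion]; exact ⟨s', hdesc, hw's'⟩)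
      obtain ⟨q0⟩ := td.isTree.isConnected.preconnected s' s
      have hq0 : q0.bypass.IsPath := q0.bypass_isPath
      have hu : u ∈ q0.bypass.support := mem_path_of_not_desc td.isTree hsdesc hs' hq0
      have hwu : w ∈ td.bag u := td.bag_sep q0.bypass hq0 u hu ⟨hws', hws⟩
      refine ⟨w, hwu, SimpleGraph.Walk.nil, ?_⟩
      intro v hv
      simp only [SimpleGraph.Walk.support_nil, List.mem_singleton] at hv
      subst hv
      exact Or.inl hwu

end AuxLemmas

/-- after adding an admissible path as in `(*)`, every component
of `G[W_u]` contains a vertex of `V_u`. -/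
theorem updated_components_meet_bag {V ι : Type u} (G : SimpleGraph V)
    (T : SimpleGraph ι) (td : TreeDecomp G T) (r t : ι) {x y : V} (P : G.Walk x y)
    (hP : IsAdmissible G T td.bag r t P) :
    ∀ u : ι, ∀ w ∈ updatedBag T td.bag r t P u,
      ∃ v ∈ td.bag u, ConnIn G (updatedBag T td.bag r t P u) w v := by
  classical
  intro u w hw
  rcases hw with hw | ⟨hdu, hwP, hwV⟩
  · refine ⟨w, hw, SimpleGraph.Walk.nil, ?_⟩
    intro v hv
    simp only [SimpleGraph.Walk.support_nil, List.mem_singleton] at hv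
    subst hv
    exact Or.inl hw
  · refine key_reach td hP hdu (P.takeUntil w hwP).reverse hP.fst_mem ?_ hwV
    intro v hv
    rw [SimpleGraph.Walk.support_reverse, List.mem_reverse] at hv
    exact P.support_takeUntil_subset hwP hv
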